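/- arXiv:2301.04247 — 2 statements merged into one kernel-verified Lean document; each statement's English description precedes it below -/
import Mathlib

section
/- Let A be a C*-algebra, H a Hilbert A-module, and x ∈ H. For any 0 < α < 1/2 there exists y in the closed submodule generated by x (the closure of xA) such that ⟨y,y⟩^{1/2} = ⟨x,x⟩^{1/2−α} and x = y·⟨x,x⟩^α. -/
open scoped RightActions NNReal

/-- The Hilbert C⋆-module class as it stood in Mathlib (December 2024): a right `A`-module
(action `SMul Aᵐᵒᵖ E`) with an `A`-valued inner product, linear in the second argument. -/
class RightCStarModule (A : outParam <| Type*) (E : Type*) [NonUnitalSemiring A] [StarRing A]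
    [Module ℂ A] [AddCommGroup E] [Module ℂ E] [PartialOrder A] [SMul Aᵐᵒᵖ E] [Norm A] [Norm E]
    extends Inner A E where
  inner_add_right {x} {y} {z} : inner x (y + z) = inner x y + inner x z
  inner_self_nonneg {x} : 0 ≤ inner x x
  inner_self {x} : inner x x = 0 ↔ x = 0
  inner_op_smul_right {a : A} {x y : E} : inner x (y <• a) = inner x y * a
  inner_smul_right_complex {z : ℂ} {x} {y} : inner x (z • y) = z • inner x y
  star_inner x y : star (inner x y) = inner y x
  norm_eq_sqrt_norm_inner_self x : ‖x‖ = Real.sqrt ‖inner x x‖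

namespace RightCStarModule

variable {A E : Type*} [NonUnitalCStarAlgebra A] [PartialOrder A] [StarOrderedRing A]
    [NormedAddCommGroup E] [NormedSpace ℂ E] [SMul Aᵐᵒᵖ E] [RightCStarModule A E]

lemma inner_add_left {x y z : E} : inner A (x + y) z = inner A x z + inner A y z := by
  rw [← RightCStarModule.star_inner z (x + y), RightCStarModule.inner_add_right, star_add,
    RightCStarModule.star_inner, RightCStarModule.star_inner]

lemma inner_op_smul_left {a : A} {x y : E} : inner A (x <• a) y = star a * inner A x y := by
  rw [← RightCStarModule.star_inner y (x <• a), RightCStarModule.inner_op_smul_right, star_mul,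
    RightCStarModule.star_inner]

noncomputable def innerAdd (x : E) : E →+ A :=
  AddMonoidHom.mk' (fun y => inner A x y) (fun _ _ => RightCStarModule.inner_add_right)

lemma inner_sub_right {x y z : E} : inner A x (y - z) = inner A x y - inner A x z :=
  map_sub (innerAdd x) y z

lemma inner_zero_right {x : E} : inner A x (0 : E) = 0 := map_zero (innerAdd x)

lemma inner_sub_left {x y z : E} : inner A (x - y) z = inner A x z - inner A y z := by
  rw [← RightCStarModule.star_inner z (x - y), RightCStarModule.inner_sub_right, star_sub,
    RightCStarModule.star_inner, RightCStarModule.star_inner]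

lemma inner_smul_right_real {r : ℝ} {x y : E} : inner A x (r • y) = r • inner A x y := by
  have h := RightCStarModule.inner_smul_right_complex (A := A) (z := (r : ℂ)) (x := x) (y := y)
  simpa only [Complex.coe_smul] using h

lemma inner_smul_left_real {r : ℝ} {x y : E} : inner A (r • x) y = r • inner A x y := by
  rw [← RightCStarModule.star_inner y (r • x), RightCStarModule.inner_smul_right_real, star_smul,
    RightCStarModule.star_inner, star_trivial]

lemma norm_sq_eq {x : E} : ‖x‖ ^ 2 = ‖inner A x x‖ := by
  rw [RightCStarModule.norm_eq_sqrt_norm_inner_self (A := A) x, Real.sq_sqrt (norm_nonneg _)]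

lemma inner_mul_inner_swap_le {x y : E} :
    inner A x y * inner A y x ≤ ‖y‖ ^ 2 • inner A x x := by
  rcases eq_or_ne y 0 with h | h
  · subst h
    simp [RightCStarModule.inner_zero_right]
  · have hy : 0 < ‖y‖ ^ 2 := pow_pos (norm_pos_iff.mpr h) 2
    have e : inner A (y <• inner A y x - ‖y‖ ^ 2 • x) (y <• inner A y x - ‖y‖ ^ 2 • x)
        = inner A x y * (inner A y y * inner A y x) - ‖y‖ ^ 2 • (inner A x y * inner A y x)
          - (‖y‖ ^ 2 • (inner A x y * inner A y x) - ‖y‖ ^ 2 • (‖y‖ ^ 2 • inner A x x)) := by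
      simp only [RightCStarModule.inner_sub_left, RightCStarModule.inner_sub_right,
        RightCStarModule.inner_op_smul_left, RightCStarModule.inner_op_smul_right,
        RightCStarModule.inner_smul_left_real, RightCStarModule.inner_smul_right_real,
        RightCStarModule.star_inner, mul_smul_comm, sub_mul, smul_mul_assoc, mul_assoc, smul_sub]
    have h0 : (0 : A) ≤ inner A (y <• inner A y x - ‖y‖ ^ 2 • x) (y <• inner A y x - ‖y‖ ^ 2 • x) :=
      RightCStarModule.inner_self_nonneg
    rw [e] at h0
    have hsa : IsSelfAdjoint (inner A y y) := RightCStarModule.star_inner y y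
    have hle := CStarAlgebra.star_left_conjugate_le_norm_smul (a := inner A y x) (b := inner A y y) hsa
    rw [RightCStarModule.star_inner, ← RightCStarModule.norm_sq_eq, mul_assoc] at hle
    have h2 := h0.trans (sub_le_sub_right (sub_le_sub_right hle _) _)
    rw [sub_self, zero_sub, neg_sub] at h2
    have h3 := sub_nonneg.mp h2
    rwa [smul_le_smul_iff_of_pos_left hy] at h3

lemma norm_inner_le {x y : E} : ‖inner A x y‖ ≤ ‖x‖ * ‖y‖ := by
  have h1 : ‖inner A x y‖ ^ 2 = ‖inner A x y * inner A y x‖ := by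
    rw [← RightCStarModule.star_inner x y, CStarRing.norm_self_mul_star, pow_two]
  have h2 : ‖inner A x y * inner A y x‖ ≤ ‖‖y‖ ^ 2 • inner A x x‖ := by
    refine CStarAlgebra.norm_le_norm_of_nonneg_of_le ?_ RightCStarModule.inner_mul_inner_swap_le
    rw [← RightCStarModule.star_inner x y]
    exact mul_star_self_nonneg _
  have h3 : ‖‖y‖ ^ 2 • inner A x x‖ = (‖x‖ * ‖y‖) ^ 2 := by
    rw [norm_smul, ← RightCStarModule.norm_sq_eq]
    simp only [norm_pow, norm_norm]
    ring
  have : ‖inner A x y‖ ^ 2 ≤ (‖x‖ * ‖y‖) ^ 2 := by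
    rw [h1, ← h3]
    exact h2
  exact (pow_le_pow_iff_left₀ (norm_nonneg _) (by positivity) (by norm_num)).mp this

lemma continuous_inner : Continuous (fun p : E × E => inner A p.1 p.2) := by
  have hb : IsBoundedBilinearMap ℝ (fun p : E × E => inner A p.1 p.2) :=
    { add_left := fun _ _ _ => RightCStarModule.inner_add_left
      smul_left := fun _ _ _ => RightCStarModule.inner_smul_left_real
      add_right := fun _ _ _ => RightCStarModule.inner_add_right
      smul_right := fun _ _ _ => RightCStarModule.inner_smul_right_real
      bound := ⟨1, one_pos, fun x y => by rw [one_mul]; exact RightCStarModule.norm_inner_le⟩ }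
  exact hb.continuous

end RightCStarModule


namespace Stmt3Aux
open NNReal

lemma divle (t ε : ℝ≥0) (hε : 0 < ε) : t / (t + ε) ≤ 1 :=
  div_le_one_of_le₀ (le_add_right le_rfl) zero_le

lemma G1 (w : ℝ) (t ε : ℝ≥0) (hε : 0 < ε) : t ^ w * (t / (t + ε)) ≤ t ^ w :=
  mul_le_of_le_one_right zero_le (divle t ε hε)

lemma G2 (w : ℝ) (t ε : ℝ≥0) (hε : 0 < ε) :
    t ^ w - t ^ w * (t / (t + ε)) = t ^ w * (ε / (t + ε)) := by
  have hne : t + ε ≠ 0 := by positivity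
  refine tsub_eq_of_eq_add ?_
  rw [← mul_add, ← add_div, add_comm ε t, div_self hne, mul_one]

lemma G3 (w : ℝ) (hw0 : 0 < w) (hw1 : w ≤ 1) (t ε : ℝ≥0) (hε : 0 < ε) :
    t ^ w * (ε / (t + ε)) ≤ ε ^ w := by
  have hne : t + ε ≠ 0 := by positivity
  have hq1 : ε / (t + ε) ≤ 1 := div_le_one_of_le₀ (le_add_left le_rfl) zero_le
  have hqpos : 0 < ε / (t + ε) := div_pos hε (by positivity)
  have h1 : ε / (t + ε) ≤ (ε / (t + ε)) ^ w := by
    conv_lhs => rw [← NNReal.rpow_one (ε / (t + ε))]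
    exact NNReal.rpow_le_rpow_of_exponent_ge hqpos hq1 hw1
  calc t ^ w * (ε / (t + ε)) ≤ t ^ w * (ε / (t + ε)) ^ w := mul_le_mul_right h1 _
    _ = (t * (ε / (t + ε))) ^ w := (NNReal.mul_rpow).symm
    _ ≤ ε ^ w := by
        refine NNReal.rpow_le_rpow ?_ hw0.le
        have : t * (ε / (t + ε)) = ε * (t / (t + ε)) := by rw [mul_div_assoc', mul_comm t ε, mul_div_assoc]
        rw [this]
        exact mul_le_of_le_one_right zero_le (divle t ε hε)

variable (α : ℝ≥0)

noncomputable def gf (ε t : ℝ≥0) : ℝ≥0 := t ^ (1 - (α : ℝ)) / (t + ε)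
noncomputable def uf (ε t : ℝ≥0) : ℝ≥0 := NNReal.sqrt t * gf α ε t
noncomputable def pf (t : ℝ≥0) : ℝ≥0 := t ^ ((1 : ℝ) / 2 - (α : ℝ))
noncomputable def qf (t : ℝ≥0) : ℝ≥0 := t ^ (1 - (α : ℝ))

variable {α}
variable (hα₀ : 0 < α) (hα : α < 1 / 2)

include hα in
lemma har : (α : ℝ) < 1 / 2 := by exact_mod_cast hα

include hα in
lemma contg {ε : ℝ≥0} (hε : 0 < ε) : Continuous (gf α ε) := by
  apply Continuous.div₀
  · exact NNReal.continuous_rpow_const (by linarith [har hα])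
  · fun_prop
  · intro t; positivity

include hα in
lemma contu {ε : ℝ≥0} (hε : 0 < ε) : Continuous (uf α ε) :=
  NNReal.continuous_sqrt.mul (contg hα hε)

include hα in
lemma contp : Continuous (pf α) :=
  NNReal.continuous_rpow_const (by linarith [har hα])

include hα in
lemma contq : Continuous (qf α) :=
  NNReal.continuous_rpow_const (by linarith [har hα])

include hα in
lemma g0 {ε : ℝ≥0} : gf α ε 0 = 0 := by
  rw [gf, NNReal.zero_rpow (ne_of_gt (by linarith [har hα])), zero_div]

lemma u0 {ε : ℝ≥0} (hα : α < 1/2) : uf α ε 0 = 0 := by simp [uf, g0 hα]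

include hα in
lemma p0 : pf α 0 = 0 := by
  rw [pf, NNReal.zero_rpow (ne_of_gt (by linarith [har hα]))]

include hα in
lemma q0 : qf α 0 = 0 := by
  rw [qf, NNReal.zero_rpow (ne_of_gt (by linarith [har hα]))]

include hα₀ hα in
lemma uI (ε t : ℝ≥0) : uf α ε t = pf α t * (t / (t + ε)) := by
  have h2 : ((1:ℝ)/2 - (α:ℝ)) + 1 ≠ 0 := by linarith [har hα]
  rw [uf, gf, pf, sqrt_eq_rpow, mul_div_assoc', mul_div_assoc']
  congr 1
  rw [← NNReal.rpow_add' (x := t) (ne_of_gt (by linarith [har hα]))]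
  rw [show (1:ℝ)/2 + (1 - (α:ℝ)) = ((1:ℝ)/2 - (α:ℝ)) + 1 by ring,
    NNReal.rpow_add' h2, NNReal.rpow_one]

lemma kI (ε t : ℝ≥0) : t * gf α ε t = qf α t * (t / (t + ε)) := by
  rw [gf, qf, mul_div_assoc', mul_div_assoc', mul_comm t]

include hα₀ hα

lemma J1 {ε : ℝ≥0} (hε : 0 < ε) (t : ℝ≥0) : uf α ε t ≤ pf α t := by
  rw [uI hα₀ hα]
  exact mul_le_of_le_one_right zero_le (divle t ε hε)

lemma J2 {ε : ℝ≥0} (hε : 0 < ε) (t : ℝ≥0) :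
    pf α t - uf α ε t ≤ ε ^ ((1:ℝ)/2 - (α:ℝ)) := by
  rw [uI hα₀ hα, pf, G2 _ _ _ hε]
  exact G3 _ (by linarith [har hα]) (by linarith [har hα, NNReal.coe_nonneg α]) t ε hε

lemma J3 {ε δ : ℝ≥0} (hε : 0 < ε) (hεδ : ε ≤ δ) (t : ℝ≥0) : uf α δ t ≤ uf α ε t := by
  rw [uI hα₀ hα, uI hα₀ hα]
  refine mul_le_mul_right ?_ _
  rw [div_eq_mul_inv, div_eq_mul_inv]
  refine mul_le_mul_right ?_ _
  exact inv_anti₀ (by positivity) (by gcongr)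

lemma J4 {ε δ : ℝ≥0} (hε : 0 < ε) (hεδ : ε ≤ δ) (t : ℝ≥0) :
    uf α ε t - uf α δ t ≤ δ ^ ((1:ℝ)/2 - (α:ℝ)) :=
  (tsub_le_tsub_right (J1 hα₀ hα hε t) _).trans (J2 hα₀ hα (hε.trans_le hεδ) t)

lemma J5 {ε : ℝ≥0} (hε : 0 < ε) (t : ℝ≥0) :
    pf α t * pf α t - uf α ε t * uf α ε t ≤ 2 * ε ^ (1 - 2*(α:ℝ)) := by
  have hu := J1 hα₀ hα hε t
  have key : pf α t * (pf α t - uf α ε t) ≤ ε ^ (1 - 2*(α:ℝ)) := by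
    rw [uI hα₀ hα, pf, G2 _ _ _ hε, ← mul_assoc,
      ← NNReal.rpow_add' (x := t) (ne_of_gt (by linarith [har hα]))]
    calc t ^ ((1:ℝ)/2 - (α:ℝ) + ((1:ℝ)/2 - (α:ℝ))) * (ε / (t + ε))
        ≤ ε ^ ((1:ℝ)/2 - (α:ℝ) + ((1:ℝ)/2 - (α:ℝ))) :=
          G3 _ (by linarith [har hα]) (by linarith [NNReal.coe_nonneg α]) t ε hε
      _ = ε ^ (1 - 2*(α:ℝ)) := by congr 1; ring
  have h2 : pf α t * pf α t - uf α ε t * uf α ε t ≤ 2 * (pf α t * (pf α t - uf α ε t)) := by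
    set c := pf α t - uf α ε t with hc
    set u := uf α ε t
    have hcu : c + u = pf α t := by
      rw [hc]; exact tsub_add_cancel_of_le hu
    rw [tsub_le_iff_right, ← hcu]
    calc (c + u) * (c + u) = c * c + (u * c + c * u + u * u) := by ring
      _ ≤ (c * c + c * c) + (u * c + c * u + u * u) := add_le_add_left le_add_self _
      _ = 2 * ((c + u) * c) + u * u := by ring
  calc pf α t * pf α t - uf α ε t * uf α ε t ≤ 2 * (pf α t * (pf α t - uf α ε t)) := h2
    _ ≤ 2 * ε ^ (1 - 2*(α:ℝ)) := mul_le_mul_right key 2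

lemma J6 {ε : ℝ≥0} (hε : 0 < ε) (t : ℝ≥0) : t * gf α ε t ≤ qf α t := by
  rw [kI]
  exact mul_le_of_le_one_right zero_le (divle t ε hε)

lemma J7 {ε : ℝ≥0} (hε : 0 < ε) (t : ℝ≥0) :
    qf α t - t * gf α ε t ≤ ε ^ (1 - (α:ℝ)) := by
  rw [kI, qf, G2 _ _ _ hε]
  exact G3 _ (by linarith [har hα]) (by linarith [NNReal.coe_nonneg α]) t ε hε

end Stmt3Aux

namespace Stmt3Aux
open NNReal

variable {A : Type*} [NonUnitalCStarAlgebra A] [PartialOrder A] [StarOrderedRing A]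

lemma star_cfcn (f : ℝ≥0 → ℝ≥0) (a : A) : star (cfcₙ f a) = cfcₙ f a :=
  (IsSelfAdjoint.of_nonneg (cfcₙ_predicate f a)).star_eq

lemma nnnorm_cfcn_sub_le {f g : ℝ≥0 → ℝ≥0} {a : A} (ha : 0 ≤ a)
    (hf : Continuous f) (hf0 : f 0 = 0) (hg : Continuous g) (hg0 : g 0 = 0)
    (hfg : ∀ t, f t ≤ g t) {c : ℝ≥0} (hc : ∀ t, g t - f t ≤ c) :
    ‖cfcₙ g a - cfcₙ f a‖₊ ≤ c := by
  rw [← cfcₙ_tsub g f a (fun t _ => hfg t) ha hg.continuousOn hg0 hf.continuousOn hf0]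
  exact nnnorm_cfcₙ_nnreal_le (fun t _ => hc t)

lemma norm_cfcn_sub_le {f g : ℝ≥0 → ℝ≥0} {a : A} (ha : 0 ≤ a)
    (hf : Continuous f) (hf0 : f 0 = 0) (hg : Continuous g) (hg0 : g 0 = 0)
    (hfg : ∀ t, f t ≤ g t) {c : ℝ≥0} (hc : ∀ t, g t - f t ≤ c) :
    ‖cfcₙ g a - cfcₙ f a‖ ≤ (c : ℝ) := by
  rw [← coe_nnnorm]
  exact_mod_cast nnnorm_cfcn_sub_le ha hf hf0 hg hg0 hfg hc

end Stmt3Aux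

namespace Stmt3Aux
open NNReal RightCStarModule Filter

variable {A E : Type*} [NonUnitalCStarAlgebra A] [PartialOrder A] [StarOrderedRing A]
    [NormedAddCommGroup E] [NormedSpace ℂ E] [SMul Aᵐᵒᵖ E] [RightCStarModule A E]

lemma inner_smul_smul (x : E) (b c : A) :
    (inner A (x <• b) (x <• c) : A) = star b * ((inner A x x : A) * c) := by
  rw [RightCStarModule.inner_op_smul_left, RightCStarModule.inner_op_smul_right]

lemma nnnorm_sq (z : E) : ‖z‖₊ * ‖z‖₊ = ‖(inner A z z : A)‖₊ := by
  rw [← NNReal.coe_inj]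
  push_cast
  rw [← sq]
  exact RightCStarModule.norm_sq_eq

lemma nnnorm_le_of_inner {z : E} {c : ℝ≥0} (h : ‖(inner A z z : A)‖₊ ≤ c * c) : ‖z‖₊ ≤ c := by
  have h2 : ‖z‖₊ * ‖z‖₊ ≤ c * c := (nnnorm_sq z).le.trans h
  calc ‖z‖₊ = NNReal.sqrt (‖z‖₊ * ‖z‖₊) := (NNReal.sqrt_mul_self _).symm
    _ ≤ NNReal.sqrt (c * c) := NNReal.sqrt_le_sqrt.mpr h2
    _ = c := NNReal.sqrt_mul_self _

end Stmt3Aux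


open Stmt3Aux NNReal RightCStarModule Filter

/-- Pedersen-type factorization in Hilbert C*-modules: for a Hilbert `A`-module `H`, `x ∈ H`
and `0 < α < 1/2`, there exists `y` in the closed submodule generated by `x` (the closure of
`x·A`) such that `⟪y,y⟫^{1/2} = ⟪x,x⟫^{1/2 - α}` and `x = y · ⟪x,x⟫^α`. -/
theorem stmt3 {A E : Type*} [NonUnitalCStarAlgebra A] [PartialOrder A] [StarOrderedRing A]
    [NormedAddCommGroup E] [NormedSpace ℂ E] [SMul Aᵐᵒᵖ E] [RightCStarModule A E] [CompleteSpace E]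
    (x : E) (α : ℝ≥0) (hα₀ : 0 < α) (hα : α < 1 / 2) :
    ∃ y ∈ closure {z : E | ∃ a : A, z = x <• a},
      CFC.nnrpow (inner A y y : A) (1 / 2) = CFC.nnrpow (inner A x x : A) (1 / 2 - α) ∧
      x = y <• CFC.nnrpow (inner A x x : A) α := by
  have hαr : (α : ℝ) < 1 / 2 := har hα
  have hαr0 : (0:ℝ) < α := hα₀
  set a : A := inner A x x with ha_def
  have ha : 0 ≤ a := RightCStarModule.inner_self_nonneg
  set rb : ℝ := (1:ℝ)/2 - (α:ℝ) with hrb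
  -- the approximating sequence
  set e : ℕ → ℝ≥0 := fun n => ((n:ℝ≥0)+1)⁻¹ with he_def
  have he : ∀ n, 0 < e n := fun n => by positivity
  have hmono : ∀ {n m : ℕ}, n ≤ m → e m ≤ e n := by
    intro n m h
    exact inv_anti₀ (by positivity) (by gcongr <;> exact_mod_cast h)
  set b : ℕ → A := fun n => cfcₙ (gf α (e n)) a with hb_def
  set s : ℕ → E := fun n => x <• b n with hs_def
  -- continuity facts
  have cg : ∀ n, Continuous (gf α (e n)) := fun n => contg hα (he n)
  have cu : ∀ n, Continuous (uf α (e n)) := fun n => contu hα (he n)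
  have cp : Continuous (pf α) := contp hα
  have cq : Continuous (qf α) := contq hα
  -- inner products of the sequence
  have key : ∀ m, a * cfcₙ (gf α (e m)) a = cfcₙ (fun t => t * gf α (e m) t) a := by
    intro m
    nth_rewrite 1 [← cfcₙ_id' ℝ≥0 a]
    exact (cfcₙ_mul (fun t : ℝ≥0 => t) (gf α (e m)) a continuous_id.continuousOn rfl
      (cg m).continuousOn (g0 hα)).symm
  have A2 : ∀ n m, (inner A (s n) (s m) : A)
      = cfcₙ (fun t => uf α (e n) t * uf α (e m) t) a := by
    intro n m
    simp only [hs_def, hb_def]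
    rw [inner_smul_smul, star_cfcn, ← ha_def, key m,
      ← cfcₙ_mul (gf α (e n)) (fun t => t * gf α (e m) t) a (cg n).continuousOn (g0 hα)
        (continuous_id.mul (cg m)).continuousOn (by simp [g0 hα])]
    refine cfcₙ_congr fun t _ => ?_
    have hst : NNReal.sqrt t * NNReal.sqrt t = t := NNReal.mul_self_sqrt t
    calc gf α (e n) t * (t * gf α (e m) t)
        = (NNReal.sqrt t * NNReal.sqrt t) * (gf α (e n) t * gf α (e m) t) := by rw [hst]; ring
      _ = uf α (e n) t * uf α (e m) t := by rw [uf, uf]; ring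
  have C2 : ∀ n, (inner A x (s n) : A) = cfcₙ (fun t => t * gf α (e n) t) a := by
    intro n
    simp only [hs_def, hb_def]
    rw [RightCStarModule.inner_op_smul_right, ← ha_def, key n]
  -- Cauchy
  have hrbpos : 0 < rb := by rw [hrb]; linarith
  have hdist : ∀ n m, n ≤ m → ‖s m - s n‖₊ ≤ (e n) ^ rb := by
    intro n m hnm
    have hun : ∀ t, uf α (e n) t ≤ uf α (e m) t := J3 hα₀ hα (he m) (hmono hnm)
    have hdd : (inner A (s m - s n) (s m - s n) : A)
        = cfcₙ (fun t => (uf α (e m) t - uf α (e n) t) * (uf α (e m) t - uf α (e n) t)) a := by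
      have hexp : (inner A (s m - s n) (s m - s n) : A)
          = cfcₙ (fun t => uf α (e m) t * uf α (e m) t) a
            - cfcₙ (fun t => uf α (e m) t * uf α (e n) t) a
            - cfcₙ (fun t => uf α (e n) t * uf α (e m) t) a
            + cfcₙ (fun t => uf α (e n) t * uf α (e n) t) a := by
        simp only [RightCStarModule.inner_sub_left, RightCStarModule.inner_sub_right, A2]
        abel
      have ptw : ∀ t, ((uf α (e m) t - uf α (e n) t) * (uf α (e m) t - uf α (e n) t)
            + uf α (e m) t * uf α (e n) t) + uf α (e n) t * uf α (e m) t
          = uf α (e m) t * uf α (e m) t + uf α (e n) t * uf α (e n) t := by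
        intro t
        rcases le_iff_exists_add.mp (hun t) with ⟨c, hc⟩
        rw [hc, add_tsub_cancel_left]
        ring
      have hsum : cfcₙ (fun t => (uf α (e m) t - uf α (e n) t) * (uf α (e m) t - uf α (e n) t)) a
            + cfcₙ (fun t => uf α (e m) t * uf α (e n) t) a
            + cfcₙ (fun t => uf α (e n) t * uf α (e m) t) a
          = cfcₙ (fun t => uf α (e m) t * uf α (e m) t) a
            + cfcₙ (fun t => uf α (e n) t * uf α (e n) t) a := by
        rw [← cfcₙ_add (fun t => (uf α (e m) t - uf α (e n) t) * (uf α (e m) t - uf α (e n) t))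
              (fun t => uf α (e m) t * uf α (e n) t) a
              (((cu m).sub (cu n)).mul ((cu m).sub (cu n))).continuousOn (by simp [u0 hα])
              ((cu m).mul (cu n)).continuousOn (by simp [u0 hα]),
            ← cfcₙ_add (fun t => (uf α (e m) t - uf α (e n) t) * (uf α (e m) t - uf α (e n) t)
                + uf α (e m) t * uf α (e n) t)
              (fun t => uf α (e n) t * uf α (e m) t) a
              ((((cu m).sub (cu n)).mul ((cu m).sub (cu n))).add
                ((cu m).mul (cu n))).continuousOn (by simp [u0 hα])
              ((cu n).mul (cu m)).continuousOn (by simp [u0 hα]),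
            ← cfcₙ_add (fun t => uf α (e m) t * uf α (e m) t)
              (fun t => uf α (e n) t * uf α (e n) t) a
              ((cu m).mul (cu m)).continuousOn (by simp [u0 hα])
              ((cu n).mul (cu n)).continuousOn (by simp [u0 hα])]
        exact cfcₙ_congr fun t _ => ptw t
      rw [hexp]
      set W := cfcₙ (fun t => (uf α (e m) t - uf α (e n) t) * (uf α (e m) t - uf α (e n) t)) a
      set X := cfcₙ (fun t => uf α (e m) t * uf α (e m) t) a
      set Y := cfcₙ (fun t => uf α (e m) t * uf α (e n) t) a
      set Z := cfcₙ (fun t => uf α (e n) t * uf α (e m) t) a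
      set D := cfcₙ (fun t => uf α (e n) t * uf α (e n) t) a
      have hW : W = X + D - Y - Z := by rw [← hsum]; abel
      rw [hW]
      abel
    refine nnnorm_le_of_inner ?_
    rw [hdd]
    exact nnnorm_cfcₙ_nnreal_le fun t _ =>
      mul_le_mul' (J4 hα₀ hα (he m) (hmono hnm) t) (J4 hα₀ hα (he m) (hmono hnm) t)
  have hecoe : ∀ N : ℕ, ((e N ^ rb : ℝ≥0) : ℝ) = ((e N : ℝ)) ^ rb := fun N =>
    NNReal.coe_rpow _ _
  have htend0 : Tendsto (fun N : ℕ => ((e N ^ rb : ℝ≥0) : ℝ)) atTop (nhds 0) := by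
    have h0 : Tendsto (fun N : ℕ => ((e N : ℝ))) atTop (nhds 0) := by
      have := tendsto_one_div_add_atTop_nhds_zero_nat (𝕜 := ℝ)
      simp only [he_def, one_div] at this ⊢
      push_cast
      exact this
    have hc : Tendsto (fun z : ℝ => z ^ rb) (nhds 0) (nhds 0) := by
      have := (Real.continuous_rpow_const hrbpos.le).tendsto 0
      rwa [Real.zero_rpow hrbpos.ne'] at this
    simp only [hecoe]
    exact hc.comp h0
  have hcauchy : CauchySeq s := by
    apply cauchySeq_of_le_tendsto_0 (b := fun N => ((e N ^ rb : ℝ≥0) : ℝ)) _ htend0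
    intro n m N hn hm
    rw [dist_eq_norm]
    rcases le_total n m with h | h
    · rw [norm_sub_rev, ← coe_nnnorm]
      exact_mod_cast (hdist n m h).trans (NNReal.rpow_le_rpow (hmono hn) hrbpos.le)
    · rw [← coe_nnnorm]
      exact_mod_cast (hdist m n h).trans (NNReal.rpow_le_rpow (hmono hm) hrbpos.le)
  obtain ⟨y, hy⟩ := cauchySeq_tendsto_of_complete hcauchy
  have hten : ∀ w : ℝ, 0 < w →
      Tendsto (fun N : ℕ => ((e N : ℝ)) ^ w) atTop (nhds 0) := by
    intro w hw
    have h0 : Tendsto (fun N : ℕ => ((e N : ℝ))) atTop (nhds 0) := by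
      have := tendsto_one_div_add_atTop_nhds_zero_nat (𝕜 := ℝ)
      simp only [he_def, one_div] at this ⊢
      push_cast
      exact this
    have hcw : Tendsto (fun z : ℝ => z ^ w) (nhds 0) (nhds 0) := by
      have := (Real.continuous_rpow_const hw.le).tendsto 0
      rwa [Real.zero_rpow hw.ne'] at this
    exact hcw.comp h0
  have hyy : (inner A y y : A) = cfcₙ (fun t => pf α t * pf α t) a := by
    refine tendsto_nhds_unique
      (((RightCStarModule.continuous_inner (A := A) (E := E)).tendsto (y, y)).comp
        (hy.prodMk_nhds hy)) ?_
    rw [tendsto_iff_norm_sub_tendsto_zero]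
    refine squeeze_zero (fun n => norm_nonneg _)
      (g := fun n => ((2 * e n ^ (1 - 2*(α:ℝ)) : ℝ≥0) : ℝ)) ?_ ?_
    · intro n
      simp only [Function.comp_apply]
      rw [A2 n n, norm_sub_rev]
      exact norm_cfcn_sub_le ha ((cu n).mul (cu n)) (by simp [u0 hα])
        (cp.mul cp) (by simp [p0 hα])
        (fun t => mul_le_mul' (J1 hα₀ hα (he n) t) (J1 hα₀ hα (he n) t))
        (fun t => J5 hα₀ hα (he n) t)
    · simp only [NNReal.coe_mul, NNReal.coe_rpow, NNReal.coe_ofNat]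
      have := (hten (1 - 2*(α:ℝ)) (by linarith)).const_mul 2
      simpa using this
  have hxy : (inner A x y : A) = cfcₙ (qf α) a := by
    refine tendsto_nhds_unique
      (((RightCStarModule.continuous_inner (A := A) (E := E)).tendsto (x, y)).comp
        (tendsto_const_nhds.prodMk_nhds hy)) ?_
    rw [tendsto_iff_norm_sub_tendsto_zero]
    refine squeeze_zero (fun n => norm_nonneg _)
      (g := fun n => ((e n ^ (1 - (α:ℝ)) : ℝ≥0) : ℝ)) ?_ ?_
    · intro n
      simp only [Function.comp_apply]
      rw [C2 n, norm_sub_rev]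
      exact norm_cfcn_sub_le ha (continuous_id.mul (cg n)) (by simp [g0 hα])
        cq (q0 hα)
        (fun t => J6 hα₀ hα (he n) t)
        (fun t => J7 hα₀ hα (he n) t)
    · simp only [NNReal.coe_rpow]
      exact hten (1 - (α:ℝ)) (by linarith)
  -- coercion arithmetic
  have h2α : 2 * α ≤ 1 := by
    rw [← NNReal.coe_le_coe]; push_cast; linarith
  have hα1 : α ≤ 1 := by
    rw [← NNReal.coe_le_coe]; push_cast; linarith
  have hαhalf : α ≤ 1/2 := hα.le
  have hγ : ((1 - 2*α : ℝ≥0) : ℝ) = 1 - 2*(α:ℝ) := by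
    rw [NNReal.coe_sub h2α]; push_cast; ring
  have h1mα : ((1 - α : ℝ≥0) : ℝ) = 1 - (α:ℝ) := by
    rw [NNReal.coe_sub hα1]; push_cast; ring
  have hγpos : 0 < 1 - 2*α := tsub_pos_of_lt (by
    rw [← NNReal.coe_lt_coe]; push_cast; linarith)
  have h1mαpos : 0 < 1 - α := tsub_pos_of_lt (hα.trans_le (by norm_num))
  have hyy' : (inner A y y : A) = CFC.nnrpow a (1 - 2*α) := by
    rw [hyy]
    have hdef : CFC.nnrpow a (1 - 2*α) = cfcₙ (fun t : ℝ≥0 => t ^ (((1 - 2*α : ℝ≥0)):ℝ)) a := rfl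
    rw [hdef]
    refine cfcₙ_congr fun t _ => ?_
    rw [pf, ← NNReal.rpow_add' (x := t) (ne_of_gt (by linarith))]
    congr 1
    rw [hγ]; ring
  have hxy' : (inner A x y : A) = CFC.nnrpow a (1 - α) := by
    rw [hxy]
    have hdef : CFC.nnrpow a (1 - α) = cfcₙ (fun t : ℝ≥0 => t ^ (((1 - α : ℝ≥0)):ℝ)) a := rfl
    rw [hdef]
    refine cfcₙ_congr fun t _ => ?_
    rw [qf, h1mα]
  have hyx' : (inner A y x : A) = CFC.nnrpow a (1 - α) := by
    rw [← RightCStarModule.star_inner, hxy']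
    exact (IsSelfAdjoint.of_nonneg CFC.nnrpow_nonneg).star_eq
  refine ⟨y, mem_closure_of_tendsto hy (.of_forall fun n => ⟨b n, rfl⟩), ?_, ?_⟩
  · rw [hyy']
    calc CFC.nnrpow (CFC.nnrpow a (1 - 2*α)) (1/2)
        = CFC.nnrpow a ((1 - 2*α) * (1/2)) := by
          rw [CFC.nnrpow_eq_pow, CFC.nnrpow_eq_pow, CFC.nnrpow_eq_pow, CFC.nnrpow_nnrpow]
      _ = CFC.nnrpow a (1/2 - α) := by
          congr 1
          rw [← NNReal.coe_inj, NNReal.coe_mul, hγ, NNReal.coe_sub hαhalf]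
          push_cast; ring
  · set c := CFC.nnrpow a α with hc_def
    have hc : 0 ≤ c := CFC.nnrpow_nonneg
    have hQc : CFC.nnrpow a (1 - α) * c = a := by
      rw [hc_def, CFC.nnrpow_eq_pow, CFC.nnrpow_eq_pow, ← CFC.nnrpow_add h1mαpos hα₀,
        tsub_add_cancel_of_le hα1]
      exact CFC.nnrpow_one a ha
    have hcQ : c * CFC.nnrpow a (1 - α) = a := by
      rw [hc_def, CFC.nnrpow_eq_pow, CFC.nnrpow_eq_pow, ← CFC.nnrpow_add hα₀ h1mαpos,
        add_tsub_cancel_of_le hα1]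
      exact CFC.nnrpow_one a ha
    have hGc : CFC.nnrpow a (1 - 2*α) * c = CFC.nnrpow a (1 - α) := by
      rw [hc_def, CFC.nnrpow_eq_pow, CFC.nnrpow_eq_pow, CFC.nnrpow_eq_pow,
        ← CFC.nnrpow_add hγpos hα₀]
      congr 1
      rw [← NNReal.coe_inj, NNReal.coe_add, hγ, h1mα]
      push_cast; ring
    have hz : (inner A (x - y <• c) (x - y <• c) : A) = 0 := by
      simp only [RightCStarModule.inner_sub_left, RightCStarModule.inner_sub_right,
        RightCStarModule.inner_op_smul_left, RightCStarModule.inner_op_smul_right,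
        (IsSelfAdjoint.of_nonneg hc).star_eq, ← ha_def]
      rw [hxy', hyx', hyy', sub_mul, mul_assoc, hGc, hQc, hcQ]
      simp
    have hzz : x - y <• c = 0 := RightCStarModule.inner_self.mp hz
    exact sub_eq_zero.mp hzz
end

section
/- Let A be a C*-algebra and H a Hilbert A-module for which K(H) has an identity. Then H is projective in the category of Hilbert A-modules with bounded (not necessarily adjointable) module maps: for any Hilbert A-modules H₁, H₂, any surjective bounded module map s : H₂ → H₁ and any bounded module map φ : H → H₁, there exists a bounded module map ψ : H → H₂ with s ∘ ψ = φ. -/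
open scoped RightActions

noncomputable section

/-- The notion of Hilbert C⋆-module (right `A`-module) as Mathlib defined it in December 2024. -/
class CStarModule' (A E : Type*) [NonUnitalSemiring A] [StarRing A] [Module ℂ A]
    [AddCommGroup E] [Module ℂ E] [PartialOrder A] [SMul Aᵐᵒᵖ E] [Norm A] [Norm E]
    extends Inner A E where
  inner_add_right {x} {y} {z} : inner x (y + z) = inner x y + inner x z
  inner_self_nonneg {x} : 0 ≤ inner x x
  inner_self {x} : inner x x = 0 ↔ x = 0
  inner_op_smul_right {a : A} {x y : E} : inner x (y <• a) = inner x y * a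
  inner_smul_right_complex {z : ℂ} {x} {y} : inner x (z • y) = z • inner x y
  star_inner x y : star (inner x y) = inner y x
  norm_eq_sqrt_norm_inner_self x : ‖x‖ = √‖inner x x‖

/-- A bounded `A`-module map between Hilbert `A`-modules. -/
def IsModuleMap (A : Type*) {E F : Type*} [NonUnitalCStarAlgebra A]
    [NormedAddCommGroup E] [Module ℂ E] [SMul Aᵐᵒᵖ E]
    [NormedAddCommGroup F] [Module ℂ F] [SMul Aᵐᵒᵖ F] (T : E →L[ℂ] F) : Prop :=
  ∀ (x : E) (a : A), T (x <• a) = T x <• a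

/-- The C*-algebra `K(H)` of "compact" operators on a Hilbert `A`-module `H`. -/
def compactOperators (A E : Type*) [NonUnitalCStarAlgebra A] [PartialOrder A]
    [StarOrderedRing A] [NormedAddCommGroup E] [NormedSpace ℂ E] [SMul Aᵐᵒᵖ E]
    [CStarModule' A E] : Set (E →L[ℂ] E) :=
  closure (Submodule.span ℂ
    {T : E →L[ℂ] E | ∃ x y : E, ∀ z, T z = x <• (inner A y z : A)} : Set (E →L[ℂ] E))

section Helpers

open CStarModule'

variable {A : Type*} [NonUnitalCStarAlgebra A] [PartialOrder A] [StarOrderedRing A]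
variable {F : Type*} [NormedAddCommGroup F] [NormedSpace ℂ F] [SMul Aᵐᵒᵖ F] [CStarModule' A F]

local notation "⟪" x ", " y "⟫" => inner (𝕜 := A) x y

namespace CStarModule'

attribute [simp] CStarModule'.inner_add_right CStarModule'.star_inner
  CStarModule'.inner_op_smul_right CStarModule'.inner_smul_right_complex

@[simp] lemma inner_add_left {x y z : F} : ⟪x + y, z⟫ = ⟪x, z⟫ + ⟪y, z⟫ := by
  rw [← star_star (r := ⟪x + y, z⟫)]
  simp only [inner_add_right, star_add, star_inner]

@[simp] lemma inner_op_smul_left {a : A} {x y : F} : ⟪x <• a, y⟫ = star a * ⟪x, y⟫ := by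
  rw [← star_inner]; simp

@[simp] lemma inner_smul_left_complex {z : ℂ} {x y : F} : ⟪z • x, y⟫ = star z • ⟪x, y⟫ := by
  rw [← star_inner]
  simp

@[simp] lemma inner_smul_left_real {z : ℝ} {x y : F} : ⟪z • x, y⟫ = z • ⟪x, y⟫ := by
  have h₁ : z • x = (z : ℂ) • x := by simp
  rw [h₁, ← star_inner, inner_smul_right_complex]
  simp

@[simp] lemma inner_smul_right_real {z : ℝ} {x y : F} : ⟪x, z • y⟫ = z • ⟪x, y⟫ := by
  have h₁ : z • y = (z : ℂ) • y := by simp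
  rw [h₁, ← star_inner, inner_smul_left_complex]
  simp

/-- The inner product bundled as a sesquilinear map. -/
def innerₛₗ : F →ₗ⋆[ℂ] F →ₗ[ℂ] A where
  toFun x := { toFun := fun y => ⟪x, y⟫
               map_add' := fun z y => by simp
               map_smul' := fun z y => by simp }
  map_add' z y := by ext; simp
  map_smul' z y := by ext; simp

lemma innerₛₗ_apply {x y : F} : innerₛₗ x y = ⟪x, y⟫ := rfl

@[simp] lemma inner_zero_right {x : F} : ⟪x, 0⟫ = 0 := by simp [← innerₛₗ_apply]
@[simp] lemma inner_zero_left {x : F} : ⟪0, x⟫ = 0 := by simp [← innerₛₗ_apply]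
@[simp] lemma inner_sub_right {x y z : F} : ⟪x, y - z⟫ = ⟪x, y⟫ - ⟪x, z⟫ := by
  simp [← innerₛₗ_apply]
@[simp] lemma inner_sub_left {x y z : F} : ⟪x - y, z⟫ = ⟪x, z⟫ - ⟪y, z⟫ := by
  simp [← innerₛₗ_apply]

@[simp]
lemma isSelfAdjoint_inner_self {x : F} : IsSelfAdjoint ⟪x, x⟫ := star_inner _ _

variable (A) in
lemma norm_sq_eq {x : F} : ‖x‖ ^ 2 = ‖⟪x, x⟫‖ := by
  simp [norm_eq_sqrt_norm_inner_self (A := A)]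

lemma inner_mul_inner_swap_le {x y : F} : ⟪y, x⟫ * ⟪x, y⟫ ≤ ‖x‖ ^ 2 • ⟪y, y⟫ := by
  rcases eq_or_ne x 0 with h | h
  · simp [h]
  · have h₁ : ∀ (a : A),
        (0 : A) ≤ ‖x‖ ^ 2 • (star a * a) - ‖x‖ ^ 2 • (star a * ⟪x, y⟫)
                  - ‖x‖ ^ 2 • (⟪y, x⟫ * a) + ‖x‖ ^ 2 • (‖x‖ ^ 2 • ⟪y, y⟫) := fun a => by
      calc (0 : A) ≤ ⟪x <• a - ‖x‖ ^ 2 • y, x <• a - ‖x‖ ^ 2 • y⟫ := by exact inner_self_nonneg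
            _ = star a * ⟪x, x⟫ * a - ‖x‖ ^ 2 • (star a * ⟪x, y⟫)
                  - ‖x‖ ^ 2 • (⟪y, x⟫ * a) + ‖x‖ ^ 2 • (‖x‖ ^ 2 • ⟪y, y⟫) := by
                      simp only [inner_sub_right, inner_op_smul_right, inner_sub_left,
                        inner_op_smul_left, inner_smul_left_real, mul_sub, mul_smul_comm,
                        inner_smul_right_real, smul_sub, mul_assoc, smul_mul_assoc, sub_mul]
                      abel
            _ ≤ ‖x‖ ^ 2 • (star a * a) - ‖x‖ ^ 2 • (star a * ⟪x, y⟫)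
                  - ‖x‖ ^ 2 • (⟪y, x⟫ * a) + ‖x‖ ^ 2 • (‖x‖ ^ 2 • ⟪y, y⟫) := by
                      gcongr
                      calc _ ≤ ‖⟪x, x⟫‖ • (star a * a) :=
                          CStarAlgebra.star_left_conjugate_le_norm_smul isSelfAdjoint_inner_self
                        _ = (√‖⟪x, x⟫‖) ^ 2 • (star a * a) := by
                          rw [Real.sq_sqrt]
                          positivity
                        _ = ‖x‖ ^ 2 • (star a * a) := by
                          rw [← norm_eq_sqrt_norm_inner_self]
    specialize h₁ ⟪x, y⟫
    simp only [star_inner, sub_self, zero_sub, le_neg_add_iff_add_le, add_zero] at h₁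
    rwa [smul_le_smul_iff_of_pos_left (pow_pos (norm_pos_iff.mpr h) _)] at h₁

variable (F) in
lemma norm_inner_le {x y : F} : ‖⟪x, y⟫‖ ≤ ‖x‖ * ‖y‖ := by
  have := calc ‖⟪x, y⟫‖ ^ 2 = ‖⟪y, x⟫ * ⟪x, y⟫‖ := by
                rw [← star_inner x y, CStarRing.norm_star_mul_self, pow_two]
    _ ≤ ‖‖x‖ ^ 2 • ⟪y, y⟫‖ := by
                refine CStarAlgebra.norm_le_norm_of_nonneg_of_le ?_ inner_mul_inner_swap_le
                rw [← star_inner x y]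
                exact star_mul_self_nonneg ⟪x, y⟫
    _ = ‖x‖ ^ 2 * ‖⟪y, y⟫‖ := by simp [norm_smul]
    _ = ‖x‖ ^ 2 * ‖y‖ ^ 2 := by rw [norm_sq_eq A (x := y)]
    _ = (‖x‖ * ‖y‖) ^ 2 := by simp only [mul_pow]
  exact (pow_le_pow_iff_left₀ (norm_nonneg _) (by positivity) (by simp)).mp this

end CStarModule'

lemma ext_inner_left' {y z : F} (h : ∀ w : F, ⟪w, y⟫ = ⟪w, z⟫) : y = z := by
  have h0 : ⟪y - z, y - z⟫ = 0 := by
    rw [CStarModule'.inner_sub_right, h (y - z), sub_self]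
  exact sub_eq_zero.mp (CStarModule'.inner_self.mp h0)

lemma op_smul_add' (x : F) (a b : A) : x <• (a + b) = x <• a + x <• b :=
  ext_inner_left' fun w => by
    rw [CStarModule'.inner_add_right (A := A), CStarModule'.inner_op_smul_right (A := A),
      CStarModule'.inner_op_smul_right (A := A), CStarModule'.inner_op_smul_right (A := A), mul_add]

lemma op_smul_csmul' (x : F) (c : ℂ) (a : A) : x <• (c • a) = c • (x <• a) :=
  ext_inner_left' fun w => by
    rw [CStarModule'.inner_op_smul_right (A := A), CStarModule'.inner_smul_right_complex (A := A),
      CStarModule'.inner_op_smul_right (A := A), mul_smul_comm]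

lemma op_smul_assoc' (x : F) (a b : A) : x <• (a * b) = (x <• a) <• b :=
  ext_inner_left' fun w => by
    rw [CStarModule'.inner_op_smul_right (A := A), CStarModule'.inner_op_smul_right (A := A),
      CStarModule'.inner_op_smul_right (A := A), mul_assoc]

lemma csmul_op_smul' (c : ℂ) (x : F) (a : A) : (c • x) <• a = c • (x <• a) :=
  ext_inner_left' fun w => by
    rw [CStarModule'.inner_op_smul_right (A := A), CStarModule'.inner_smul_right_complex (A := A),
      CStarModule'.inner_smul_right_complex (A := A), CStarModule'.inner_op_smul_right (A := A),
      smul_mul_assoc]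

lemma add_op_smul' (x y : F) (a : A) : (x + y) <• a = x <• a + y <• a :=
  ext_inner_left' fun w => by
    rw [CStarModule'.inner_op_smul_right (A := A), CStarModule'.inner_add_right (A := A),
      CStarModule'.inner_add_right (A := A), CStarModule'.inner_op_smul_right (A := A),
      CStarModule'.inner_op_smul_right (A := A), add_mul]

lemma zero_op_smul' (a : A) : (0 : F) <• a = 0 :=
  ext_inner_left' fun w => by
    rw [CStarModule'.inner_op_smul_right (A := A), CStarModule'.inner_zero_right (A := A), zero_mul]

lemma norm_op_smul_le' (x : F) (a : A) : ‖x <• a‖ ≤ ‖x‖ * ‖a‖ := by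
  have h1 : ‖x <• a‖ ^ 2 ≤ (‖x‖ * ‖a‖) ^ 2 := by
    rw [CStarModule'.norm_sq_eq A]
    calc ‖⟪x <• a, x <• a⟫‖ = ‖star a * ⟪x, x⟫ * a‖ := by simp [mul_assoc]
      _ ≤ ‖star a * ⟪x, x⟫‖ * ‖a‖ := norm_mul_le _ _
      _ ≤ ‖star a‖ * ‖⟪x, x⟫‖ * ‖a‖ := by gcongr; exact norm_mul_le _ _
      _ = ‖a‖ * ‖x‖ ^ 2 * ‖a‖ := by rw [norm_star, CStarModule'.norm_sq_eq A]
      _ = (‖x‖ * ‖a‖) ^ 2 := by ring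
  exact (pow_le_pow_iff_left₀ (norm_nonneg _) (by positivity) (by norm_num)).mp h1

variable {E : Type*} [NormedAddCommGroup E] [NormedSpace ℂ E] [SMul Aᵐᵒᵖ E] [CStarModule' A E]

/-- The "rank-one" operator `z ↦ u <• ⟪y, z⟫`. -/
def rankOne (u : F) (y : E) : E →L[ℂ] F :=
  LinearMap.mkContinuous
    { toFun := fun z => u <• ⟪y, z⟫
      map_add' := fun z z' => by
        show u <• ⟪y, z + z'⟫ = u <• ⟪y, z⟫ + u <• ⟪y, z'⟫
        rw [CStarModule'.inner_add_right, op_smul_add']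
      map_smul' := fun c z => by
        show u <• ⟪y, c • z⟫ = c • (u <• ⟪y, z⟫)
        rw [CStarModule'.inner_smul_right_complex, op_smul_csmul'] }
    (‖u‖ * ‖y‖) fun z => by
      calc ‖u <• ⟪y, z⟫‖ ≤ ‖u‖ * ‖⟪y, z⟫‖ := norm_op_smul_le' _ _
        _ ≤ ‖u‖ * (‖y‖ * ‖z‖) := by
              gcongr
              exact norm_inner_le E
        _ = ‖u‖ * ‖y‖ * ‖z‖ := by ring

@[simp] lemma rankOne_apply (u : F) (y : E) (z : E) :
    rankOne (A := A) u y z = u <• ⟪y, z⟫ := rfl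

lemma isModuleMap_rankOne (u : F) (y : E) : IsModuleMap A (rankOne (A := A) u y) := fun z a => by
  rw [rankOne_apply, rankOne_apply, inner_op_smul_right (A := A), op_smul_assoc']

end Helpers

/-- If `K(H)` has an identity, then the Hilbert `A`-module `H` is projective in the
category of Hilbert `A`-modules with bounded (not necessarily adjointable) module maps:
for any surjective bounded module map `s : H₂ → H₁` and any bounded module map
`φ : H → H₁`, there is a bounded module map `ψ : H → H₂` with `s ∘ ψ = φ`. -/
theorem stmt8 {A E E₁ E₂ : Type*} [NonUnitalCStarAlgebra A] [PartialOrder A]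
    [StarOrderedRing A]
    [NormedAddCommGroup E] [NormedSpace ℂ E] [SMul Aᵐᵒᵖ E] [CStarModule' A E]
    [CompleteSpace E]
    [NormedAddCommGroup E₁] [NormedSpace ℂ E₁] [SMul Aᵐᵒᵖ E₁] [CStarModule' A E₁]
    [CompleteSpace E₁]
    [NormedAddCommGroup E₂] [NormedSpace ℂ E₂] [SMul Aᵐᵒᵖ E₂] [CStarModule' A E₂]
    [CompleteSpace E₂]
    (hunit : ∃ e ∈ compactOperators A E, ∀ T ∈ compactOperators A E,
      e * T = T ∧ T * e = T)
    (s : E₂ →L[ℂ] E₁) (hs : IsModuleMap A s) (hsurj : Function.Surjective s)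
    (φ : E →L[ℂ] E₁) (hφ : IsModuleMap A φ) :
    ∃ ψ : E →L[ℂ] E₂, IsModuleMap A ψ ∧ s.comp ψ = φ := by
  classical
  obtain ⟨e, heK, he⟩ := hunit
  set S : Set (E →L[ℂ] E) :=
    {T : E →L[ℂ] E | ∃ x y : E, ∀ z, T z = x <• (inner A y z : A)} with hS
  -- rank one operators are compact
  have h_rank_mem : ∀ x y : E, rankOne (A := A) x y ∈ compactOperators A E := fun x y =>
    subset_closure (Submodule.subset_span ⟨x, y, fun z => rfl⟩)
  -- the unit acts as the identity on E
  have heid : ∀ x : E, e x = x := by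
    intro x
    set d : E := x - e x with hd
    have hθ := (he (rankOne (A := A) d d) (h_rank_mem d d)).2
    have h1 : rankOne (A := A) d d x = rankOne (A := A) d d (e x) := by
      conv_lhs => rw [← hθ]
      rw [ContinuousLinearMap.mul_apply]
    have h0 : d <• (inner A d d : A) = 0 := by
      have h2 : rankOne (A := A) d d (x - e x) = 0 := by
        rw [map_sub, h1, sub_self]
      rw [rankOne_apply] at h2
      exact h2
    have ha : (inner A d d : A) * (inner A d d : A) = 0 := by
      have h3 := congrArg (fun w => (inner A d w : A)) h0
      simpa [CStarModule'.inner_op_smul_right] using h3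
    have hnorm : ‖(inner A d d : A)‖ * ‖(inner A d d : A)‖ = 0 := by
      rw [← CStarRing.norm_star_mul_self,
        (CStarModule'.isSelfAdjoint_inner_self (x := d)).star_eq, ha, norm_zero]
    have hd0 : d = 0 := by
      have h4 : (inner A d d : A) = 0 := norm_eq_zero.mp (mul_self_eq_zero.mp hnorm)
      exact CStarModule'.inner_self.mp h4
    have := sub_eq_zero.mp hd0
    exact this.symm
  -- the identity operator is compact
  have hidK : (ContinuousLinearMap.id ℂ E) ∈
      closure (Submodule.span ℂ S : Set (E →L[ℂ] E)) := by
    have : (ContinuousLinearMap.id ℂ E) = e :=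
      ContinuousLinearMap.ext fun x => (heid x).symm
    rw [this]
    exact heK
  -- extract a finite-rank operator T close to the identity
  obtain ⟨T, hTspan, hTnear⟩ :
      ∃ T ∈ (Submodule.span ℂ S : Set (E →L[ℂ] E)),
        ‖ContinuousLinearMap.id ℂ E - T‖ < 1 := by
    obtain ⟨T, hT, hdist⟩ := Metric.mem_closure_iff.mp hidK 1 one_pos
    exact ⟨T, hT, by rwa [dist_eq_norm] at hdist⟩
  -- every element of the span is a module map
  have hMM : ∀ T' ∈ Submodule.span ℂ S, IsModuleMap A T' := by
    intro T' hT'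
    induction hT' using Submodule.span_induction with
    | mem T0 hT0 =>
        obtain ⟨u, y, huy⟩ := hT0
        have hT0eq : T0 = rankOne (A := A) u y := ContinuousLinearMap.ext fun z => huy z
        rw [hT0eq]
        exact isModuleMap_rankOne u y
    | zero =>
        intro x a
        rw [ContinuousLinearMap.zero_apply, ContinuousLinearMap.zero_apply,
          zero_op_smul']
    | add T1 T2 h1 h2 ih1 ih2 =>
        intro x a
        rw [ContinuousLinearMap.add_apply, ContinuousLinearMap.add_apply,
          ih1 x a, ih2 x a, add_op_smul']
    | smul c T0 h0 ih =>
        intro x a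
        rw [ContinuousLinearMap.smul_apply, ContinuousLinearMap.smul_apply,
          ih x a, csmul_op_smul']
  have hTmm : IsModuleMap A T := hMM T hTspan
  -- T is invertible
  have hTnear' : ‖(1 : E →L[ℂ] E) - T‖ < 1 := hTnear
  set U : (E →L[ℂ] E)ˣ := Units.oneSub ((1 : E →L[ℂ] E) - T)
    (by simpa using hTnear') with hUdef
  have hU : (U : E →L[ℂ] E) = T := sub_sub_cancel 1 T
  set T' : E →L[ℂ] E := ((U⁻¹ : (E →L[ℂ] E)ˣ) : E →L[ℂ] E) with hT'def
  have hrinv : ∀ z : E, T (T' z) = z := fun z => by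
    have : (T * T') = 1 := by rw [← hU]; exact U.mul_inv
    rw [← ContinuousLinearMap.mul_apply, this, ContinuousLinearMap.one_apply]
  have hlinv : ∀ z : E, T' (T z) = z := fun z => by
    have : (T' * T) = 1 := by rw [← hU]; exact U.inv_mul
    rw [← ContinuousLinearMap.mul_apply, this, ContinuousLinearMap.one_apply]
  have hTinj : Function.Injective T := Function.LeftInverse.injective hlinv
  have hT'mm : IsModuleMap A T' := by
    intro x a
    apply hTinj
    rw [hrinv, hTmm, hrinv]
  -- the lifting property for elements of the span
  have hlift : ∀ T'' ∈ Submodule.span ℂ S,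
      ∃ ψ : E →L[ℂ] E₂, IsModuleMap A ψ ∧ s.comp ψ = φ.comp T'' := by
    intro T'' hT''
    induction hT'' using Submodule.span_induction with
    | mem T0 hT0 =>
        obtain ⟨x, y, hxy⟩ := hT0
        obtain ⟨u, hu⟩ := hsurj (φ x)
        refine ⟨rankOne (A := A) u y, isModuleMap_rankOne u y, ?_⟩
        ext z
        simp only [ContinuousLinearMap.comp_apply, rankOne_apply, hxy]
        rw [hs, hu, ← hφ]
    | zero =>
        refine ⟨0, fun x a => by
          rw [ContinuousLinearMap.zero_apply, ContinuousLinearMap.zero_apply,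
            zero_op_smul'], ?_⟩
        ext z; simp
    | add T1 T2 h1 h2 ih1 ih2 =>
        obtain ⟨ψ1, hm1, hc1⟩ := ih1
        obtain ⟨ψ2, hm2, hc2⟩ := ih2
        refine ⟨ψ1 + ψ2, ?_, ?_⟩
        · intro x a
          rw [ContinuousLinearMap.add_apply, ContinuousLinearMap.add_apply,
            hm1 x a, hm2 x a, add_op_smul']
        · ext z
          have e1 := ContinuousLinearMap.ext_iff.mp hc1 z
          have e2 := ContinuousLinearMap.ext_iff.mp hc2 z
          simp only [ContinuousLinearMap.comp_apply, ContinuousLinearMap.add_apply,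
            map_add] at *
          rw [e1, e2]
    | smul c T0 h0 ih =>
        obtain ⟨ψ0, hm0, hc0⟩ := ih
        refine ⟨c • ψ0, ?_, ?_⟩
        · intro x a
          rw [ContinuousLinearMap.smul_apply, ContinuousLinearMap.smul_apply,
            hm0 x a, csmul_op_smul']
        · ext z
          have e0 := ContinuousLinearMap.ext_iff.mp hc0 z
          simp only [ContinuousLinearMap.comp_apply, ContinuousLinearMap.smul_apply,
            map_smul] at *
          rw [e0]
  obtain ⟨ψ0, hψ0m, hψ0⟩ := hlift T hTspan
  refine ⟨ψ0.comp T', ?_, ?_⟩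
  · intro x a
    show ψ0 (T' (x <• a)) = ψ0 (T' x) <• a
    rw [hT'mm x a, hψ0m (T' x) a]
  · ext z
    have := ContinuousLinearMap.ext_iff.mp hψ0 (T' z)
    simpa [hrinv z] using this

end
end
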